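/- arXiv:2009.04574 — 4 statements merged into one kernel-verified Lean document; each statement's English description precedes it below -/
import Mathlib

section
/- The one-dimensional fault boundary value problem has a unique solution: if v ∈ ℝ is a constant and q : [0, L] → ℝ is differentiable on [0, xg) and (xg, L] with q′(x) = −v there, q(0) = p0, q(L) = pL, the one-sided limits q(xg⁻) and q(xg⁺) exist, and v = t_f·(q(xg⁻) − q(xg⁺)), then v = u := (p0 − pL)/(t_f⁻¹ + L), q(x) = p0 − u·x for all x ∈ [0, xg), and q(x) = pL + u·(L − x) for all x ∈ (xg, L]. -/
open Set Filter Topology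

/-- On a convex set where `q` has derivative `-v`, `q x + v*x` is constant. -/
lemma affine_on_convex {s : Set ℝ} (hs : Convex ℝ s) (q : ℝ → ℝ) (v : ℝ)
    (hq : ∀ x ∈ s, HasDerivWithinAt q (-v) s x) {x y : ℝ} (hx : x ∈ s) (hy : y ∈ s) :
    q x + v * x = q y + v * y := by
  set g : ℝ → ℝ := fun x => q x + v * x with hg
  have hg' : ∀ z ∈ s, HasDerivWithinAt g 0 s z := by
    intro z hz
    have := (hq z hz).add ((hasDerivWithinAt_id z s).const_mul v)
    exact this.congr_deriv (by simp)
  have := hs.norm_image_sub_le_of_norm_hasDerivWithin_le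
    (f' := fun _ => (0 : ℝ)) (C := 0) (fun z hz => hg' z hz) (fun z hz => by simp) hy hx
  have : ‖g x - g y‖ ≤ 0 := by simpa using this
  have : g x = g y := by
    have := norm_nonneg (g x - g y)
    have hz : ‖g x - g y‖ = 0 := le_antisymm ‹‖g x - g y‖ ≤ 0› this
    have := norm_eq_zero.mp hz
    linarith [sub_eq_zero.mp this]
  simpa [hg] using this

/-- Uniqueness for the one-dimensional fault boundary value problem: any constant
velocity `v` and pressure `q` solving the problem (derivative `-v` on `[0, xg)` and
`(xg, L]`, boundary values `p0`, `pL`, one-sided limits `qm`, `qp` at the fault, and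
coupling `v = t_f * (qm - qp)`) must satisfy `v = u := (p0 - pL)/(t_f⁻¹ + L)` and be
given by the explicit piecewise-linear formulas. -/
theorem stmt_1 (L xg tf p0 pL : ℝ) (hL : 0 < L) (hxg0 : 0 < xg) (hxgL : xg < L)
    (htf : 0 < tf) (u : ℝ) (hu : u = (p0 - pL) / (tf⁻¹ + L))
    (v : ℝ) (q : ℝ → ℝ)
    (hq1 : ∀ x ∈ Ico (0 : ℝ) xg, HasDerivWithinAt q (-v) (Ico (0 : ℝ) xg) x)
    (hq2 : ∀ x ∈ Ioc xg L, HasDerivWithinAt q (-v) (Ioc xg L) x)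
    (hq0 : q 0 = p0) (hqL : q L = pL)
    (qm qp : ℝ)
    (hqm : Tendsto q (𝓝[<] xg) (𝓝 qm))
    (hqp : Tendsto q (𝓝[>] xg) (𝓝 qp))
    (hcoup : v = tf * (qm - qp)) :
    v = u ∧
    (∀ x ∈ Ico (0 : ℝ) xg, q x = p0 - u * x) ∧
    (∀ x ∈ Ioc xg L, q x = pL + u * (L - x)) := by
  -- explicit formulas with v
  have h0mem : (0 : ℝ) ∈ Ico (0 : ℝ) xg := ⟨le_refl 0, hxg0⟩
  have hLmem : L ∈ Ioc xg L := ⟨hxgL, le_refl L⟩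
  have hleft : ∀ x ∈ Ico (0 : ℝ) xg, q x = p0 - v * x := by
    intro x hx
    have := affine_on_convex (convex_Ico 0 xg) q v hq1 hx h0mem
    rw [hq0] at this; linarith
  have hright : ∀ x ∈ Ioc xg L, q x = pL + v * (L - x) := by
    intro x hx
    have := affine_on_convex (convex_Ioc xg L) q v hq2 hx hLmem
    rw [hqL] at this; nlinarith
  -- limits
  have hqm' : Tendsto q (𝓝[<] xg) (𝓝 (p0 - v * xg)) := by
    have hcont : Tendsto (fun x => p0 - v * x) (𝓝[<] xg) (𝓝 (p0 - v * xg)) :=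
      (Continuous.tendsto (by fun_prop) xg).mono_left nhdsWithin_le_nhds
    refine hcont.congr' ?_
    filter_upwards [Ioo_mem_nhdsLT_of_mem ⟨hxg0, le_refl xg⟩] with x hx
    exact (hleft x ⟨le_of_lt hx.1, hx.2⟩).symm
  have hqp' : Tendsto q (𝓝[>] xg) (𝓝 (pL + v * (L - xg))) := by
    have hcont : Tendsto (fun x => pL + v * (L - x)) (𝓝[>] xg) (𝓝 (pL + v * (L - xg))) :=
      (Continuous.tendsto (by fun_prop) xg).mono_left nhdsWithin_le_nhds
    refine hcont.congr' ?_
    filter_upwards [Ioo_mem_nhdsGT_of_mem ⟨le_refl xg, hxgL⟩] with x hx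
    exact (hright x ⟨hx.1, le_of_lt hx.2⟩).symm
  have hne : (𝓝[<] xg).NeBot := nhdsLT_neBot xg
  have hne' : (𝓝[>] xg).NeBot := nhdsGT_neBot xg
  have hqmeq : qm = p0 - v * xg := tendsto_nhds_unique hqm hqm'
  have hqpeq : qp = pL + v * (L - xg) := tendsto_nhds_unique hqp hqp'
  -- solve for v
  have hveq : v = u := by
    rw [hqmeq, hqpeq] at hcoup
    rw [hu]
    have htf' : tf ≠ 0 := ne_of_gt htf
    have hden : tf⁻¹ + L ≠ 0 := by positivity
    field_simp
    nlinarith [hcoup]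
  refine ⟨hveq, ?_, ?_⟩
  · intro x hx; rw [hleft x hx, hveq]
  · intro x hx; rw [hright x hx, hveq]
end

section
/- The decoupled equation with Dirichlet boundary conditions is equivalent to the approximate fault equation: if q : [0, L] → ℝ is twice continuously differentiable and satisfies −q″(x) + (δ′(x)/(t_f + δ(x)))·q′(x) = 0 for all x ∈ (0, L), q(0) = p0, q(L) = pL, and if δ ≥ 0, H(0) = 0 and H(L) = 1 (in particular ∫₀ᴸ δ = 1), then q(x) = p_ε(x) for all x ∈ [0, L]; consequently q also satisfies −q″(x) = δ′(x)·u/t_f on (0, L). -/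
open Set Filter Topology intervalIntegral

/-- The decoupled equation with Dirichlet boundary conditions is equivalent to the
approximate fault equation: any twice continuously differentiable `q : [0,L] → ℝ`
satisfying `-q''(x) + (δ'(x)/(t_f + δ(x)))·q'(x) = 0` on `(0, L)` with `q(0) = p0`,
`q(L) = pL` (given `δ ≥ 0`, `H(0) = 0`, `H(L) = 1`) equals `p_ε` on `[0, L]`, and
consequently satisfies `-q''(x) = δ'(x)·u/t_f` on `(0, L)`. -/
theorem stmt_7 (L xg tf p0 pL : ℝ) (hL : 0 < L) (hxg0 : 0 < xg) (hxgL : xg < L)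
    (htf : 0 < tf) (u : ℝ) (hu : u = (p0 - pL) / (tf⁻¹ + L))
    (δ H pe : ℝ → ℝ) (hδ : ContDiff ℝ (⊤ : ℕ∞) δ) (hδ0 : ∀ x, 0 ≤ δ x)
    (hH : ∀ x, H x = ∫ t in (0 : ℝ)..x, δ t)
    (hpe1 : ∀ x, 0 ≤ x → x ≤ xg → pe x = p0 - u * x - H x * u / tf)
    (hpe2 : ∀ x, xg ≤ x → x ≤ L → pe x = pL + u * (L - x) - (H x - 1) * u / tf)
    (hH0 : H 0 = 0) (hHL : H L = 1)
    (q : ℝ → ℝ) (hq : ContDiffOn ℝ 2 q (Icc 0 L))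
    (hode : ∀ x ∈ Ioo (0 : ℝ) L,
      -(deriv (deriv q) x) + (deriv δ x / (tf + δ x)) * deriv q x = 0)
    (hq0 : q 0 = p0) (hqL : q L = pL) :
    (∀ x ∈ Icc (0 : ℝ) L, q x = pe x) ∧
    (∀ x ∈ Ioo (0 : ℝ) L, -(deriv (deriv q) x) = deriv δ x * u / tf) := by
  have hIcc : UniqueDiffOn ℝ (Icc (0:ℝ) L) := uniqueDiffOn_Icc hL
  set q1 := derivWithin q (Icc (0:ℝ) L) with hq1def
  set q2 := derivWithin q1 (Icc (0:ℝ) L) with hq2def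
  have hq1cd : ContDiffOn ℝ 1 q1 (Icc 0 L) := hq.derivWithin hIcc (by norm_num)
  have hq1diff : DifferentiableOn ℝ q1 (Icc 0 L) := hq1cd.differentiableOn one_ne_zero
  have hqdiff : DifferentiableOn ℝ q (Icc 0 L) := hq.differentiableOn (by norm_num)
  have hmem : ∀ x ∈ Ioo (0:ℝ) L, Icc (0:ℝ) L ∈ 𝓝 x := fun x hx =>
    Icc_mem_nhds hx.1 hx.2
  have hDq : ∀ x ∈ Ioo (0:ℝ) L, HasDerivAt q (q1 x) x := fun x hx =>
    ((hqdiff x (Ioo_subset_Icc_self hx)).hasDerivWithinAt).hasDerivAt (hmem x hx)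
  have hDq1 : ∀ x ∈ Ioo (0:ℝ) L, HasDerivAt q1 (q2 x) x := fun x hx =>
    ((hq1diff x (Ioo_subset_Icc_self hx)).hasDerivWithinAt).hasDerivAt (hmem x hx)
  have hderivq : ∀ x ∈ Ioo (0:ℝ) L, deriv q x = q1 x := fun x hx => (hDq x hx).deriv
  have hderivderivq : ∀ x ∈ Ioo (0:ℝ) L, deriv (deriv q) x = q2 x := by
    intro x hx
    have h1 : deriv q =ᶠ[𝓝 x] q1 :=
      Filter.eventuallyEq_of_mem (isOpen_Ioo.mem_nhds hx) hderivq
    rw [h1.deriv_eq]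
    exact (hDq1 x hx).deriv
  have hpos : ∀ x, 0 < tf + δ x := fun x => by linarith [hδ0 x]
  have hode' : ∀ x ∈ Ioo (0:ℝ) L, q2 x = deriv δ x / (tf + δ x) * q1 x := by
    intro x hx
    have := hode x hx
    rw [hderivderivq x hx, hderivq x hx] at this
    linarith
  -- the function r = q1 / (tf + δ) has zero derivative on (0, L)
  set r := fun x => q1 x / (tf + δ x) with hrdef
  have hδd : Differentiable ℝ δ := hδ.differentiable (by simp)
  have hDr : ∀ x ∈ Ioo (0:ℝ) L, HasDerivAt r 0 x := by
    intro x hx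
    have hd : HasDerivAt (fun y => tf + δ y) (deriv δ x) x :=
      ((hδd x).hasDerivAt).const_add tf
    have := (hDq1 x hx).div hd (hpos x).ne'
    refine this.congr_deriv (Eq.symm ?_)
    rw [hode' x hx]
    have hne := (hpos x).ne'
    field_simp
    ring
  have hrcont : ContinuousOn r (Icc 0 L) :=
    hq1cd.continuousOn.div (continuous_const.add hδ.continuous).continuousOn (fun x _ => (hpos x).ne')
  have hrdiff : DifferentiableOn ℝ r (interior (Icc (0:ℝ) L)) := by
    rw [interior_Icc]
    exact fun x hx => ((hDr x hx).differentiableAt).differentiableWithinAt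
  have hrd0 : ∀ x ∈ interior (Icc (0:ℝ) L), deriv r x = 0 := by
    rw [interior_Icc]; exact fun x hx => (hDr x hx).deriv
  have hrconst : ∀ x ∈ Icc (0:ℝ) L, r x = r 0 := by
    have hmono := monotoneOn_of_deriv_nonneg (convex_Icc (0:ℝ) L) hrcont hrdiff
      (fun x hx => le_of_eq (hrd0 x hx).symm)
    have hanti := antitoneOn_of_deriv_nonpos (convex_Icc (0:ℝ) L) hrcont hrdiff
      (fun x hx => le_of_eq (hrd0 x hx))
    intro x hx
    have h0 : (0:ℝ) ∈ Icc (0:ℝ) L := left_mem_Icc.2 hL.le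
    exact le_antisymm (hanti h0 hx hx.1) (hmono h0 hx hx.1)
  set c := r 0 with hcdef
  have hq1eq : ∀ x ∈ Icc (0:ℝ) L, q1 x = c * (tf + δ x) := by
    intro x hx
    have := hrconst x hx
    rw [hrdef] at this
    simp only at this
    rw [div_eq_iff (hpos x).ne'] at this
    linarith [this]
  -- H has derivative δ
  have hHfun : H = fun x => ∫ t in (0:ℝ)..x, δ t := funext hH
  have hHderiv : ∀ x, HasDerivAt H (δ x) x := by
    intro x
    rw [hHfun]
    exact intervalIntegral.integral_hasDerivAt_right
      (hδ.continuous.intervalIntegrable 0 x)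
      (hδ.continuous.stronglyMeasurableAtFilter MeasureTheory.volume (𝓝 x))
      hδ.continuous.continuousAt
  -- G = q - c (tf x + H) is constant on [0, L]
  set G := fun x => q x - c * (tf * x + H x) with hGdef
  have hDG : ∀ x ∈ Ioo (0:ℝ) L, HasDerivAt G 0 x := by
    intro x hx
    have hd : HasDerivAt (fun y => c * (tf * y + H y)) (c * (tf + δ x)) x := by
      have h1 := (((hasDerivAt_id x).const_mul tf).add (hHderiv x)).const_mul c
      exact h1.congr_deriv (by ring)
    have := (hDq x hx).sub hd
    rw [hq1eq x (Ioo_subset_Icc_self hx), sub_self] at this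
    exact this
  have hHc : Continuous H := by
    rw [continuous_iff_continuousAt]
    exact fun x => (hHderiv x).continuousAt
  have hGcont : ContinuousOn G (Icc 0 L) := by
    apply hq.continuousOn.sub
    exact (continuous_const.mul ((continuous_const.mul continuous_id).add hHc)).continuousOn
  have hGdiff : DifferentiableOn ℝ G (interior (Icc (0:ℝ) L)) := by
    rw [interior_Icc]
    exact fun x hx => ((hDG x hx).differentiableAt).differentiableWithinAt
  have hGd0 : ∀ x ∈ interior (Icc (0:ℝ) L), deriv G x = 0 := by
    rw [interior_Icc]; exact fun x hx => (hDG x hx).deriv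
  have hGconst : ∀ x ∈ Icc (0:ℝ) L, G x = G 0 := by
    have hmono := monotoneOn_of_deriv_nonneg (convex_Icc (0:ℝ) L) hGcont hGdiff
      (fun x hx => le_of_eq (hGd0 x hx).symm)
    have hanti := antitoneOn_of_deriv_nonpos (convex_Icc (0:ℝ) L) hGcont hGdiff
      (fun x hx => le_of_eq (hGd0 x hx))
    intro x hx
    have h0 : (0:ℝ) ∈ Icc (0:ℝ) L := left_mem_Icc.2 hL.le
    exact le_antisymm (hanti h0 hx hx.1) (hmono h0 hx hx.1)
  have hG0 : G 0 = p0 := by simp [hGdef, hq0, hH0]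
  have hqform : ∀ x ∈ Icc (0:ℝ) L, q x = p0 + c * (tf * x + H x) := by
    intro x hx
    have := hGconst x hx
    rw [hG0, hGdef] at this
    simp only at this
    linarith
  -- determine c from the boundary conditions
  have hcval : c * (tf * L + 1) = pL - p0 := by
    have := hqform L (right_mem_Icc.2 hL.le)
    rw [hqL, hHL] at this
    linarith
  have hden : (0:ℝ) < tf⁻¹ + L := by positivity
  have huid : u * tf⁻¹ + u * L = p0 - pL := by
    have : u * (tf⁻¹ + L) = p0 - pL := by
      rw [hu]; field_simp
    linarith [this]
  have hctf : c * tf = -u := by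
    have htfinv : tf * tf⁻¹ = 1 := mul_inv_cancel₀ htf.ne'
    have huid2 : u + u * L * tf = tf * (p0 - pL) := by
      linear_combination tf * huid - u * htfinv
    have key : (c * tf + u) * (tf * L + 1) = 0 := by
      linear_combination tf * hcval + huid2
    have hpos2 : (0:ℝ) < tf * L + 1 := by positivity
    have := mul_eq_zero.1 key
    rcases this with h | h
    · linarith
    · linarith
  have hc : c = -u / tf := by
    rw [eq_div_iff htf.ne']
    linarith [hctf]
  constructor
  · intro x hx
    have hqx := hqform x hx
    by_cases hxle : x ≤ xg
    · rw [hpe1 x hx.1 hxle, hqx, hc]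
      field_simp
      ring
    · rw [hpe2 x (le_of_not_ge hxle) hx.2, hqx, hc]
      have hp0 : p0 = pL + u * L + u / tf := by
        have : u * tf⁻¹ = u / tf := by rw [div_eq_mul_inv]
        linarith [huid]
      rw [hp0]
      field_simp
      ring
  · intro x hx
    rw [hderivderivq x hx, hode' x hx, hq1eq x (Ioo_subset_Icc_self hx)]
    have hne := (hpos x).ne'
    have : deriv δ x / (tf + δ x) * (c * (tf + δ x)) = c * deriv δ x := by
      field_simp
    rw [this, hc]
    field_simp
end

section
/- The approximate pressure p_ε satisfies the weak (variational) formulation of the decoupled equation: for every C^∞ function w : ℝ → ℝ with compact support contained in the open interval (0, L), one has ∫₀ᴸ p_ε′(x)·w′(x) dx + ∫₀ᴸ (δ′(x)/(t_f + δ(x)))·p_ε′(x)·w(x) dx = 0, provided δ ≥ 0. -/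
open Set Filter Topology intervalIntegral

/-- The approximate pressure `p_ε` satisfies the weak (variational) formulation of the
decoupled equation: for every smooth test function `w` with compact support contained
in `(0, L)`, `∫₀ᴸ p_ε'·w' + ∫₀ᴸ (δ'/(t_f + δ))·p_ε'·w = 0`, provided `δ ≥ 0`. -/
theorem stmt_8 (L xg tf p0 pL : ℝ) (hL : 0 < L) (hxg0 : 0 < xg) (hxgL : xg < L)
    (htf : 0 < tf) (u : ℝ) (hu : u = (p0 - pL) / (tf⁻¹ + L))
    (δ H pe : ℝ → ℝ) (hδ : ContDiff ℝ (⊤ : ℕ∞) δ) (hδ0 : ∀ x, 0 ≤ δ x)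
    (hH : ∀ x, H x = ∫ t in (0 : ℝ)..x, δ t)
    (hpe1 : ∀ x, 0 ≤ x → x ≤ xg → pe x = p0 - u * x - H x * u / tf)
    (hpe2 : ∀ x, xg ≤ x → x ≤ L → pe x = pL + u * (L - x) - (H x - 1) * u / tf) :
    ∀ w : ℝ → ℝ, ContDiff ℝ (⊤ : ℕ∞) w → HasCompactSupport w →
      tsupport w ⊆ Ioo (0 : ℝ) L →
      (∫ x in (0 : ℝ)..L, deriv pe x * deriv w x) +
        (∫ x in (0 : ℝ)..L, (deriv δ x / (tf + δ x)) * deriv pe x * w x) = 0 := by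
  intro w hw hwc hws
  have htf' : tf ≠ 0 := ne_of_gt htf
  have hden : ∀ x, tf + δ x ≠ 0 := fun x => ne_of_gt (by linarith [hδ0 x])
  have hsum : (0:ℝ) < tf⁻¹ + L := by positivity
  have hkey : p0 - pL = u * (tf⁻¹ + L) := by
    rw [hu]; field_simp
  -- derivative of H
  have hδc : Continuous δ := hδ.continuous
  have hH' : ∀ x, HasDerivAt H (δ x) x := by
    have hHfun : H = fun x => ∫ t in (0:ℝ)..x, δ t := funext hH
    intro x
    rw [hHfun]
    exact intervalIntegral.integral_hasDerivAt_right (hδc.intervalIntegrable _ _)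
      (hδc.stronglyMeasurableAtFilter _ _) hδc.continuousAt
  -- the global formula and its derivative
  have hg : ∀ x, HasDerivAt (fun y => p0 - u * y - H y * u / tf)
      (-u - δ x * u / tf) x := by
    intro x
    have h1 := ((hasDerivAt_const x p0).sub ((hasDerivAt_id x).const_mul u)).sub
      ((hH' x).mul_const (u / tf))
    have h2 : -u - δ x * u / tf = 0 - u * 1 - δ x * (u / tf) := by ring
    rw [h2]
    simp only [mul_div_assoc]
    exact h1
  -- pe agrees with the global formula on Ioo 0 L
  have hpeg : ∀ x ∈ Ioo (0:ℝ) L, pe x = p0 - u * x - H x * u / tf := by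
    intro x hx
    rcases le_or_gt x xg with h | h
    · exact hpe1 x hx.1.le h
    · rw [hpe2 x h.le hx.2.le]
      have hpL : pL = p0 - u * (tf⁻¹ + L) := by linarith
      rw [hpL]
      field_simp
      ring
  have hpederiv : ∀ x ∈ Ioo (0:ℝ) L, deriv pe x = -u - δ x * u / tf := by
    intro x hx
    have hev : pe =ᶠ[𝓝 x] (fun y => p0 - u * y - H y * u / tf) :=
      eventuallyEq_of_mem (isOpen_Ioo.mem_nhds hx) hpeg
    rw [hev.deriv_eq]
    exact (hg x).deriv
  -- ae : points of Ι 0 L are in Ioo 0 L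
  have haeL : ∀ᵐ x : ℝ, x ≠ L := by
    have hs : {x : ℝ | ¬ x ≠ L} = {L} := by ext x; simp
    rw [MeasureTheory.ae_iff, hs]
    exact Real.volume_singleton
  have haeIoo : ∀ᵐ x : ℝ, x ∈ Set.uIoc (0:ℝ) L → x ∈ Ioo (0:ℝ) L := by
    filter_upwards [haeL] with x hx hmem
    rw [Set.uIoc_of_le hL.le] at hmem
    exact ⟨hmem.1, lt_of_le_of_ne hmem.2 hx⟩
  -- differentiablity of w and δ
  have hwd : ∀ x, HasDerivAt w (deriv w x) x :=
    fun x => (hw.differentiable (by simp) x).hasDerivAt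
  have hδd : ∀ x, HasDerivAt δ (deriv δ x) x :=
    fun x => (hδ.differentiable (by simp) x).hasDerivAt
  have hwdc : Continuous (deriv w) := hw.continuous_deriv (by exact_mod_cast le_top)
  have hδdc : Continuous (deriv δ) := hδ.continuous_deriv (by exact_mod_cast le_top)
  -- rewrite the first integral
  have hI1 : (∫ x in (0:ℝ)..L, deriv pe x * deriv w x)
      = ∫ x in (0:ℝ)..L, (-u - δ x * u / tf) * deriv w x := by
    apply intervalIntegral.integral_congr_ae
    filter_upwards [haeIoo] with x hx hmem
    rw [hpederiv x (hx hmem)]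
  -- rewrite the second integral
  have hI2 : (∫ x in (0:ℝ)..L, (deriv δ x / (tf + δ x)) * deriv pe x * w x)
      = ∫ x in (0:ℝ)..L, (-u / tf) * (deriv δ x * w x) := by
    apply intervalIntegral.integral_congr_ae
    filter_upwards [haeIoo] with x hx hmem
    rw [hpederiv x (hx hmem)]
    have h1 := hden x
    field_simp
    ring
  rw [hI1, hI2]
  -- integrability
  have hA : IntervalIntegrable (fun x => (-u - δ x * u / tf) * deriv w x)
      MeasureTheory.volume 0 L :=
    (Continuous.mul (continuous_const.sub ((hδc.mul continuous_const).div_const tf)) hwdc).intervalIntegrable _ _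
  have hB : IntervalIntegrable (fun x => (-u / tf) * (deriv δ x * w x))
      MeasureTheory.volume 0 L :=
    (Continuous.mul continuous_const (hδdc.mul hw.continuous)).intervalIntegrable _ _
  rw [← intervalIntegral.integral_add hA hB]
  -- FTC with antiderivative F
  have hF : ∀ x, HasDerivAt (fun y => -u * w y - u / tf * (δ y * w y))
      ((-u - δ x * u / tf) * deriv w x + (-u / tf) * (deriv δ x * w x)) x := by
    intro x
    have h1 := ((hwd x).const_mul (-u)).sub (((hδd x).mul (hwd x)).const_mul (u / tf))
    have h2 : (-u - δ x * u / tf) * deriv w x + (-u / tf) * (deriv δ x * w x)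
        = -u * deriv w x - u / tf * (deriv δ x * w x + δ x * deriv w x) := by
      field_simp
      ring
    rw [h2]
    exact h1
  have hfc : IntervalIntegrable
      (fun x => (-u - δ x * u / tf) * deriv w x + (-u / tf) * (deriv δ x * w x))
      MeasureTheory.volume 0 L := hA.add hB
  rw [intervalIntegral.integral_eq_sub_of_hasDerivAt (fun x _ => hF x) hfc]
  have hw0 : w 0 = 0 := by
    apply image_eq_zero_of_notMem_tsupport
    intro h
    exact absurd (hws h) (by simp)
  have hwL : w L = 0 := by
    apply image_eq_zero_of_notMem_tsupport
    intro h
    exact absurd (hws h) (by simp)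
  simp [hw0, hwL]
end

section
/- One-dimensional distributional Laplacian identity for a pressure with a jump: let p : [0, L] → ℝ be continuous on [0, xg) and on (xg, L], twice continuously differentiable on (0, xg) and on (xg, L), with one-sided limits p⁻ := lim_{x→xg⁻} p(x), p⁺ := lim_{x→xg⁺} p(x), and with one-sided derivative limits at xg that exist and are equal (continuity of the flux p′ across xg). Suppose −p″(x) = f(x) on (0, xg) ∪ (xg, L) for a function f that is continuous on [0, xg) and (xg, L] and integrable on [0, L]. Then for every C^∞ function φ : ℝ → ℝ with compact support contained in (0, L): −∫₀ᴸ p(x)·φ″(x) dx = ∫₀ᴸ f(x)·φ(x) dx − (p⁻ − p⁺)·φ′(xg). -/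
open Set Filter Topology MeasureTheory intervalIntegral

private lemma aux_intervalIntegrable {g : ℝ → ℝ} {a b ga gb : ℝ} (hab : a < b)
    (hg : ContinuousOn g (Ioo a b))
    (ha : Tendsto g (𝓝[Ioo a b] a) (𝓝 ga)) (hb : Tendsto g (𝓝[Ioo a b] b) (𝓝 gb)) :
    IntervalIntegrable g MeasureTheory.volume a b := by
  set G : ℝ → ℝ := Function.update (Function.update g a ga) b gb with hG
  have hcont : ContinuousOn G (Icc a b) := by
    rw [hG, continuousOn_update_iff, continuousOn_update_iff, Icc_sdiff_right, Ico_diff_left]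
    refine ⟨⟨hg, ?_⟩, ?_⟩
    · exact fun _ => ha
    · intro _
      have hIcoIoo : 𝓝[Ico a b] b = 𝓝[Ioo a b] b := by
        rw [nhdsWithin_restrict' (s := Ico a b) (t := Ioi a) (isOpen_Ioi.mem_nhds hab)]
        congr 1
        ext x
        simp only [mem_inter_iff, mem_Ico, mem_Ioi, mem_Ioo]
        exact ⟨fun h => ⟨h.2, h.1.2⟩, fun h => ⟨⟨h.1.le, h.2⟩, h.1⟩⟩
      rw [hIcoIoo]
      refine hb.congr' ?_
      filter_upwards [self_mem_nhdsWithin] with x hx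
      exact (Function.update_of_ne hx.1.ne' _ _).symm
  have hGint : IntervalIntegrable G MeasureTheory.volume a b := by
    apply ContinuousOn.intervalIntegrable
    rwa [uIcc_of_le hab.le]
  rw [intervalIntegrable_iff_integrableOn_Ioo_of_le hab.le] at hGint ⊢
  refine hGint.congr_fun (fun x hx => ?_) measurableSet_Ioo
  rw [hG, Function.update_of_ne hx.2.ne, Function.update_of_ne hx.1.ne']

private lemma aux_ibp {a b : ℝ} (hab : a < b) {p φ : ℝ → ℝ}
    (hp : ContDiffOn ℝ 2 p (Ioo a b)) (hφ : ContDiff ℝ (⊤ : ℕ∞) φ)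
    {ga gb : ℝ}
    (hga : Tendsto (fun x => p x * deriv φ x - deriv p x * φ x) (𝓝[Ioo a b] a) (𝓝 ga))
    (hgb : Tendsto (fun x => p x * deriv φ x - deriv p x * φ x) (𝓝[Ioo a b] b) (𝓝 gb))
    (hint1 : IntervalIntegrable (fun x => p x * deriv (deriv φ) x) MeasureTheory.volume a b)
    (hint2 : IntervalIntegrable (fun x => deriv (deriv p) x * φ x) MeasureTheory.volume a b) :
    (∫ x in a..b, p x * deriv (deriv φ) x) - (∫ x in a..b, deriv (deriv p) x * φ x)
      = gb - ga := by
  have hφ' : ContDiff ℝ (⊤ : ℕ∞) (deriv φ) := (contDiff_infty_iff_deriv.mp hφ).2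
  have hdp : ContDiffOn ℝ 1 (deriv p) (Ioo a b) :=
    hp.deriv_of_isOpen isOpen_Ioo (by norm_num)
  have hderiv : ∀ x ∈ Ioo a b,
      HasDerivAt (fun x => p x * deriv φ x - deriv p x * φ x)
        (p x * deriv (deriv φ) x - deriv (deriv p) x * φ x) x := by
    intro x hx
    have hmem : Ioo a b ∈ 𝓝 x := isOpen_Ioo.mem_nhds hx
    have hpx : HasDerivAt p (deriv p x) x :=
      ((hp.differentiableOn (by norm_num)).differentiableAt hmem).hasDerivAt
    have hp2x : HasDerivAt (deriv p) (deriv (deriv p) x) x :=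
      ((hdp.differentiableOn one_ne_zero).differentiableAt hmem).hasDerivAt
    have hφx : HasDerivAt φ (deriv φ x) x :=
      ((hφ.differentiable (by norm_num)) x).hasDerivAt
    have hφ1x : HasDerivAt (deriv φ) (deriv (deriv φ) x) x :=
      ((hφ'.differentiable (by norm_num)) x).hasDerivAt
    have H := (hpx.mul hφ1x).sub (hp2x.mul hφx)
    exact H.congr_deriv (by ring)
  have hna : 𝓝[>] a = 𝓝[Ioo a b] a := by
    rw [nhdsWithin_restrict' (s := Ioi a) (t := Iio b) (isOpen_Iio.mem_nhds hab), Ioi_inter_Iio]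
  have hnb : 𝓝[<] b = 𝓝[Ioo a b] b := by
    rw [nhdsWithin_restrict' (s := Iio b) (t := Ioi a) (isOpen_Ioi.mem_nhds hab)]
    congr 1
    rw [inter_comm, Ioi_inter_Iio]
  have key := integral_eq_sub_of_hasDerivAt_of_tendsto hab hderiv (hint1.sub hint2)
    (hna ▸ hga) (hnb ▸ hgb)
  rw [intervalIntegral.integral_sub hint1 hint2] at key
  exact key

/-- One-dimensional distributional Laplacian identity for a pressure with a jump:
if `p` is continuous on `[0, xg)` and `(xg, L]`, twice continuously differentiable on
`(0, xg)` and `(xg, L)`, has one-sided limits `pm`, `pp` at `xg`, equal one-sided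
limits `d` of its derivative at `xg` (flux continuity), and `-p'' = f` on
`(0, xg) ∪ (xg, L)` with `f` continuous on `[0, xg)` and `(xg, L]` and integrable on
`[0, L]`, then for every smooth `φ` compactly supported in `(0, L)`:
`-∫₀ᴸ p·φ'' = ∫₀ᴸ f·φ - (pm - pp)·φ'(xg)`. -/
theorem stmt_9 (L xg : ℝ) (hL : 0 < L) (hxg0 : 0 < xg) (hxgL : xg < L)
    (p f : ℝ → ℝ) (pm pp d : ℝ)
    (hc1 : ContinuousOn p (Ico 0 xg)) (hc2 : ContinuousOn p (Ioc xg L))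
    (hs1 : ContDiffOn ℝ 2 p (Ioo 0 xg)) (hs2 : ContDiffOn ℝ 2 p (Ioo xg L))
    (hpm : Tendsto p (𝓝[<] xg) (𝓝 pm)) (hpp : Tendsto p (𝓝[>] xg) (𝓝 pp))
    (hdm : Tendsto (deriv p) (𝓝[<] xg) (𝓝 d))
    (hdp : Tendsto (deriv p) (𝓝[>] xg) (𝓝 d))
    (hfc1 : ContinuousOn f (Ico 0 xg)) (hfc2 : ContinuousOn f (Ioc xg L))
    (hfi : IntegrableOn f (Icc 0 L))
    (hode : ∀ x ∈ Ioo (0 : ℝ) xg ∪ Ioo xg L, -(deriv (deriv p) x) = f x) :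
    ∀ φ : ℝ → ℝ, ContDiff ℝ (⊤ : ℕ∞) φ → HasCompactSupport φ →
      tsupport φ ⊆ Ioo (0 : ℝ) L →
      -(∫ x in (0 : ℝ)..L, p x * deriv (deriv φ) x) =
        (∫ x in (0 : ℝ)..L, f x * φ x) - (pm - pp) * deriv φ xg := by
  intro φ hφ hφc hsupp
  have hφ1 : ContDiff ℝ (⊤ : ℕ∞) (deriv φ) := (contDiff_infty_iff_deriv.mp hφ).2
  have hφcont : Continuous φ := hφ.continuous
  have hφc1 : Continuous (deriv φ) := hφ1.continuous
  have hφc2 : Continuous (deriv (deriv φ)) := (contDiff_infty_iff_deriv.mp hφ1).2.continuous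
  -- vanishing near 0 and L
  have h0 : (0 : ℝ) ∉ tsupport φ := fun h => lt_irrefl 0 (hsupp h).1
  have hLn : L ∉ tsupport φ := fun h => lt_irrefl L (hsupp h).2
  have hvan : ∀ y : ℝ, y ∉ tsupport φ →
      (∀ᶠ x in 𝓝 y, φ x = 0 ∧ deriv φ x = 0) := by
    intro y hy
    filter_upwards [(isClosed_tsupport φ).isOpen_compl.mem_nhds hy] with x hx
    exact ⟨image_eq_zero_of_notMem_tsupport hx,
      Function.notMem_support.mp (fun h => hx (support_deriv_subset h))⟩
  have hg0 : Tendsto (fun x => p x * deriv φ x - deriv p x * φ x)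
      (𝓝[Ioo 0 xg] 0) (𝓝 0) := by
    refine tendsto_const_nhds.congr' ?_
    filter_upwards [(hvan 0 h0).filter_mono nhdsWithin_le_nhds] with x hx
    rw [hx.1, hx.2]; ring
  have hgL : Tendsto (fun x => p x * deriv φ x - deriv p x * φ x)
      (𝓝[Ioo xg L] L) (𝓝 0) := by
    refine tendsto_const_nhds.congr' ?_
    filter_upwards [(hvan L hLn).filter_mono nhdsWithin_le_nhds] with x hx
    rw [hx.1, hx.2]; ring
  have hgxm : Tendsto (fun x => p x * deriv φ x - deriv p x * φ x)
      (𝓝[Ioo 0 xg] xg) (𝓝 (pm * deriv φ xg - d * φ xg)) :=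
    ((hpm.mono_left (nhdsWithin_mono _ Ioo_subset_Iio_self)).mul
      ((hφc1.tendsto xg).mono_left nhdsWithin_le_nhds)).sub
      ((hdm.mono_left (nhdsWithin_mono _ Ioo_subset_Iio_self)).mul
      ((hφcont.tendsto xg).mono_left nhdsWithin_le_nhds))
  have hgxp : Tendsto (fun x => p x * deriv φ x - deriv p x * φ x)
      (𝓝[Ioo xg L] xg) (𝓝 (pp * deriv φ xg - d * φ xg)) :=
    ((hpp.mono_left (nhdsWithin_mono _ Ioo_subset_Ioi_self)).mul
      ((hφc1.tendsto xg).mono_left nhdsWithin_le_nhds)).sub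
      ((hdp.mono_left (nhdsWithin_mono _ Ioo_subset_Ioi_self)).mul
      ((hφcont.tendsto xg).mono_left nhdsWithin_le_nhds))
  -- integrability of f * φ
  obtain ⟨C, hC⟩ := hφcont.bounded_above_of_compact_support hφc
  have hfφ : IntegrableOn (fun x => f x * φ x) (Icc 0 L) := by
    have h1 : Integrable (fun x => φ x * f x) (volume.restrict (Icc 0 L)) :=
      hfi.bdd_mul hφcont.aestronglyMeasurable (c := C) (ae_of_all _ hC)
    have h2 : (fun x => φ x * f x) = fun x => f x * φ x := by funext x; ring
    rwa [h2] at h1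
  have hfφ1 : IntervalIntegrable (fun x => f x * φ x) volume 0 xg := by
    rw [intervalIntegrable_iff_integrableOn_Ioc_of_le hxg0.le]
    exact hfφ.mono_set (fun x hx => ⟨hx.1.le, hx.2.trans hxgL.le⟩)
  have hfφ2 : IntervalIntegrable (fun x => f x * φ x) volume xg L := by
    rw [intervalIntegrable_iff_integrableOn_Ioc_of_le hxgL.le]
    exact hfφ.mono_set (fun x hx => ⟨(hxg0.trans hx.1).le, hx.2⟩)
  -- integrability of p'' * φ
  have hppφ1 : IntervalIntegrable (fun x => deriv (deriv p) x * φ x) volume 0 xg := by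
    rw [intervalIntegrable_iff_integrableOn_Ioo_of_le hxg0.le]
    have base : IntegrableOn (fun x => -(f x * φ x)) (Ioo 0 xg) :=
      (hfφ.mono_set (fun x hx => ⟨hx.1.le, hx.2.le.trans hxgL.le⟩)).neg
    refine base.congr_fun (fun x hx => ?_) measurableSet_Ioo
    have h1 := hode x (Or.inl hx)
    have h2 : deriv (deriv p) x = -f x := by linarith
    rw [h2]; ring
  have hppφ2 : IntervalIntegrable (fun x => deriv (deriv p) x * φ x) volume xg L := by
    rw [intervalIntegrable_iff_integrableOn_Ioo_of_le hxgL.le]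
    have base : IntegrableOn (fun x => -(f x * φ x)) (Ioo xg L) :=
      (hfφ.mono_set (fun x hx => ⟨(hxg0.trans hx.1).le, hx.2.le⟩)).neg
    refine base.congr_fun (fun x hx => ?_) measurableSet_Ioo
    have h1 := hode x (Or.inr hx)
    have h2 : deriv (deriv p) x = -f x := by linarith
    rw [h2]; ring
  -- integrability of p * φ''
  have hpφ1 : IntervalIntegrable (fun x => p x * deriv (deriv φ) x) volume 0 xg := by
    refine aux_intervalIntegrable hxg0 (hs1.continuousOn.mul hφc2.continuousOn)
      (ga := p 0 * deriv (deriv φ) 0) (gb := pm * deriv (deriv φ) xg) ?_ ?_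
    · exact (Filter.Tendsto.mono_left (hc1.continuousWithinAt ⟨le_refl 0, hxg0⟩)
        (nhdsWithin_mono _ Ioo_subset_Ico_self)).mul
        ((hφc2.tendsto 0).mono_left nhdsWithin_le_nhds)
    · exact (hpm.mono_left (nhdsWithin_mono _ Ioo_subset_Iio_self)).mul
        ((hφc2.tendsto xg).mono_left nhdsWithin_le_nhds)
  have hpφ2 : IntervalIntegrable (fun x => p x * deriv (deriv φ) x) volume xg L := by
    refine aux_intervalIntegrable hxgL (hs2.continuousOn.mul hφc2.continuousOn)
      (ga := pp * deriv (deriv φ) xg) (gb := p L * deriv (deriv φ) L) ?_ ?_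
    · exact (hpp.mono_left (nhdsWithin_mono _ Ioo_subset_Ioi_self)).mul
        ((hφc2.tendsto xg).mono_left nhdsWithin_le_nhds)
    · exact (Filter.Tendsto.mono_left (hc2.continuousWithinAt ⟨hxgL, le_refl L⟩)
        (nhdsWithin_mono _ Ioo_subset_Ioc_self)).mul
        ((hφc2.tendsto L).mono_left nhdsWithin_le_nhds)
  -- integration by parts on each interval
  have I1 := aux_ibp hxg0 hs1 hφ hg0 hgxm hpφ1 hppφ1
  have I2 := aux_ibp hxgL hs2 hφ hgxp hgL hpφ2 hppφ2
  -- replace p'' φ with -(f φ)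
  have hne : ∀ y : ℝ, ∀ᵐ x : ℝ, x ≠ y := by
    intro y
    rw [ae_iff]
    simp only [ne_eq, not_not, setOf_eq_eq_singleton]
    exact measure_singleton y
  have J1 : (∫ x in (0:ℝ)..xg, deriv (deriv p) x * φ x)
      = -∫ x in (0:ℝ)..xg, f x * φ x := by
    rw [← intervalIntegral.integral_neg]
    apply intervalIntegral.integral_congr_ae
    filter_upwards [hne xg] with x hx hmem
    rw [uIoc_of_le hxg0.le] at hmem
    have hxIoo : x ∈ Ioo 0 xg := ⟨hmem.1, lt_of_le_of_ne hmem.2 hx⟩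
    have h1 := hode x (Or.inl hxIoo)
    have h2 : deriv (deriv p) x = -f x := by linarith
    rw [h2]; ring
  have J2 : (∫ x in xg..L, deriv (deriv p) x * φ x)
      = -∫ x in xg..L, f x * φ x := by
    rw [← intervalIntegral.integral_neg]
    apply intervalIntegral.integral_congr_ae
    filter_upwards [hne L] with x hx hmem
    rw [uIoc_of_le hxgL.le] at hmem
    have hxIoo : x ∈ Ioo xg L := ⟨hmem.1, lt_of_le_of_ne hmem.2 hx⟩
    have h1 := hode x (Or.inr hxIoo)
    have h2 : deriv (deriv p) x = -f x := by linarith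
    rw [h2]; ring
  have hsplit := intervalIntegral.integral_add_adjacent_intervals hpφ1 hpφ2
  have hsplitf := intervalIntegral.integral_add_adjacent_intervals hfφ1 hfφ2
  linear_combination hsplit + hsplitf - I1 - I2 - J1 - J2
end
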